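/- Let Λ be a proper Λ-sequence and f : [0,1] → ℝ. Then ‖B_nf − f‖_Λ → 0 as n → ∞ (equivalently V_Λ(B_nf − f) → 0 in [0,∞], since B_nf(0) = f(0)) if and only if f is continuous, of bounded Λ-variation, and continuous in Λ-variation. -/

import Mathlib

open Filter Set MeasureTheory
open scoped ENNReal Topology

/-- `l` is a Λ-sequence (indexed from 0, so `l 0` plays the role of `λ₁`):
a nondecreasing sequence of positive reals whose reciprocals have divergent sum. -/
def IsLambdaSeq (l : ℕ → ℝ) : Prop :=
  Monotone l ∧ (∀ n, 0 < l n) ∧ ¬ Summable (fun n => 1 / l n)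

/-- A proper Λ-sequence: additionally `λₙ → ∞`. -/
def IsProperLambdaSeq (l : ℕ → ℝ) : Prop :=
  IsLambdaSeq l ∧ Tendsto l atTop atTop

/-- The Λ-variation of `f` computed over partition points taken from `K`:
the supremum of `∑ⱼ |f(x_{j+1}) - f(x_j)| / λ_{β(j)}` over all `m`, all nondecreasing
tuples `x₁ ≤ … ≤ x_{m+1}` of points of `K` and all permutations `β` of the gaps. -/
noncomputable def lamVarOn (l : ℕ → ℝ) (f : ℝ → ℝ) (K : Set ℝ) : ℝ≥0∞ :=
  ⨆ (m : ℕ) (x : Fin (m + 1) → ℝ) (_ : Monotone x) (_ : ∀ j, x j ∈ K)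
    (β : Equiv.Perm (Fin m)),
    ∑ j : Fin m, ENNReal.ofReal (|f (x j.succ) - f (x j.castSucc)| / l (β j))

/-- The Λ-variation of `f : [0,1] → ℝ`. -/
noncomputable def lamVar (l : ℕ → ℝ) (f : ℝ → ℝ) : ℝ≥0∞ :=
  lamVarOn l f (Set.Icc 0 1)

/-- The norm `‖f‖_Λ = V_Λ(f) + |f 0|` (valued in `[0,∞]`). -/
noncomputable def lamNorm (l : ℕ → ℝ) (f : ℝ → ℝ) : ℝ≥0∞ :=
  lamVar l f + ENNReal.ofReal |f 0|

/-- `f` is continuous in Λ-variation: `V_{Λ_(m)}(f) → 0` as `m → ∞`. -/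
def ContInLamVar (l : ℕ → ℝ) (f : ℝ → ℝ) : Prop :=
  Tendsto (fun m => lamVar (fun n => l (n + m)) f) atTop (𝓝 0)

/-- The restricted Λ-variation `V_{Λ,δ}(f)`: the supremum of `∑ⱼ |f(bⱼ) - f(aⱼ)| / λⱼ`
over all finite sequences of nonoverlapping closed subintervals `[aⱼ, bⱼ]` of `[0,1]`
of length at most `δ`, listed in any order. -/
noncomputable def lamVarDelta (l : ℕ → ℝ) (δ : ℝ) (f : ℝ → ℝ) : ℝ≥0∞ :=
  ⨆ (k : ℕ) (a : Fin k → ℝ) (b : Fin k → ℝ)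
    (_ : ∀ j, 0 ≤ a j ∧ a j ≤ b j ∧ b j ≤ 1 ∧ b j - a j ≤ δ)
    (_ : ∀ i j, i ≠ j → b i ≤ a j ∨ b j ≤ a i),
    ∑ j : Fin k, ENNReal.ofReal (|f (b j) - f (a j)| / l j)

/-- The `n`-th Bernstein polynomial of `f : [0,1] → ℝ`. -/
noncomputable def bern (n : ℕ) (f : ℝ → ℝ) (x : ℝ) : ℝ :=
  ∑ k ∈ Finset.range (n + 1),
    f ((k : ℝ) / n) * (n.choose k : ℝ) * x ^ k * (1 - x) ^ (n - k)

/-- The `n`-th Kantorovich polynomial of `f : [0,1] → ℝ`. -/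
noncomputable def kant (n : ℕ) (f : ℝ → ℝ) (x : ℝ) : ℝ :=
  ∑ k ∈ Finset.range (n + 1),
    (n.choose k : ℝ) * x ^ k * (1 - x) ^ (n - k) *
      ((n + 1) * ∫ t in ((k : ℝ) / (n + 1))..(((k : ℝ) + 1) / (n + 1)), f t)


section LamVarAux

open Finset in
private lemma exists_perm_le (p : ℕ) (c : Fin p → ℕ) (hc : Function.Injective c) :
    ∃ e : Equiv.Perm (Fin p), ∀ j, ((e j : ℕ)) ≤ c j := by
  classical
  set s : Finset ℕ := Finset.univ.image c with hs
  have hcard : s.card = p := by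
    rw [hs, Finset.card_image_of_injective _ hc, Finset.card_univ, Fintype.card_fin]
  set E := s.orderIsoOfFin hcard with hE
  have hsm : StrictMono (fun i : Fin p => ((E i : ℕ))) :=
    fun a b hab => by exact_mod_cast (E.strictMono hab)
  have key : ∀ k : ℕ, ∀ h : k < p, k ≤ ((E ⟨k, h⟩ : ℕ)) := by
    intro k
    induction k with
    | zero => intro h; exact Nat.zero_le _
    | succ k ih =>
      intro h
      have hk : k < p := Nat.lt_of_succ_lt h
      have h1 : ((E ⟨k, hk⟩ : ℕ)) < ((E ⟨k+1, h⟩ : ℕ)) := hsm (by simp [Fin.mk_lt_mk])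
      have h2 := ih hk
      omega
  have hle : ∀ i : Fin p, (i : ℕ) ≤ ((E i : ℕ)) := fun i => by
    simpa [Fin.eta] using key i.val i.isLt
  have hmem : ∀ j : Fin p, c j ∈ s := fun j => Finset.mem_image_of_mem _ (Finset.mem_univ j)
  let tau : Fin p → s := fun j => ⟨c j, hmem j⟩
  have htauinj : Function.Injective tau := fun a b hab => hc (congrArg Subtype.val hab)
  have htaubij : Function.Bijective tau := by
    rw [Fintype.bijective_iff_injective_and_card]
    refine ⟨htauinj, by simp [Fintype.card_coe, hcard]⟩
  let taue : Fin p ≃ s := Equiv.ofBijective tau htaubij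
  refine ⟨taue.trans E.symm.toEquiv, fun j => ?_⟩
  have h3 : E ((taue.trans E.symm.toEquiv) j) = tau j := by
    simp [taue, Equiv.trans_apply]
  have hcj : ((E ((taue.trans E.symm.toEquiv) j) : ℕ)) = c j := by rw [h3]
  calc ((taue.trans E.symm.toEquiv) j : ℕ) ≤ ((E ((taue.trans E.symm.toEquiv) j) : ℕ)) := hle _
    _ = c j := hcj

private lemma le_lamVarOn (l : ℕ → ℝ) (f : ℝ → ℝ) (K : Set ℝ) {m : ℕ} (x : Fin (m+1) → ℝ)
    (hx : Monotone x) (hxK : ∀ j, x j ∈ K) (β : Equiv.Perm (Fin m)) :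
    (∑ j : Fin m, ENNReal.ofReal (|f (x j.succ) - f (x j.castSucc)| / l (β j)))
      ≤ lamVarOn l f K :=
  le_iSup_of_le m (le_iSup_of_le x (le_iSup_of_le hx (le_iSup_of_le hxK (le_iSup_of_le β le_rfl))))

private lemma lamVarOn_le (l : ℕ → ℝ) (f : ℝ → ℝ) (K : Set ℝ) {C : ℝ≥0∞}
    (h : ∀ (m : ℕ) (x : Fin (m+1) → ℝ), Monotone x → (∀ j, x j ∈ K) →
      ∀ β : Equiv.Perm (Fin m),
      (∑ j : Fin m, ENNReal.ofReal (|f (x j.succ) - f (x j.castSucc)| / l (β j))) ≤ C) :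
    lamVarOn l f K ≤ C :=
  iSup_le fun m => iSup_le fun x => iSup_le fun hx => iSup_le fun hK => iSup_le fun β =>
    h m x hx hK β

private lemma lamVar_le_add (l : ℕ → ℝ) (hpos : ∀ n, 0 < l n) (h h₁ h₂ : ℝ → ℝ)
    (hh : ∀ u ∈ Icc (0:ℝ) 1, ∀ v ∈ Icc (0:ℝ) 1, |h u - h v| ≤ |h₁ u - h₁ v| + |h₂ u - h₂ v|) :
    lamVar l h ≤ lamVar l h₁ + lamVar l h₂ := by
  refine lamVarOn_le _ _ _ (fun m x hx hK β => ?_)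
  have hterm : ∀ j : Fin m,
      ENNReal.ofReal (|h (x j.succ) - h (x j.castSucc)| / l (β j))
        ≤ ENNReal.ofReal (|h₁ (x j.succ) - h₁ (x j.castSucc)| / l (β j))
          + ENNReal.ofReal (|h₂ (x j.succ) - h₂ (x j.castSucc)| / l (β j)) := by
    intro j
    have hlp := hpos (β j)
    have h1 : |h (x j.succ) - h (x j.castSucc)| / l (β j)
        ≤ |h₁ (x j.succ) - h₁ (x j.castSucc)| / l (β j)
          + |h₂ (x j.succ) - h₂ (x j.castSucc)| / l (β j) := by
      rw [← add_div]
      exact div_le_div_of_nonneg_right (hh _ (hK _) _ (hK _)) hlp.le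
    calc ENNReal.ofReal (|h (x j.succ) - h (x j.castSucc)| / l (β j))
        ≤ ENNReal.ofReal (|h₁ (x j.succ) - h₁ (x j.castSucc)| / l (β j)
            + |h₂ (x j.succ) - h₂ (x j.castSucc)| / l (β j)) := ENNReal.ofReal_le_ofReal h1
      _ ≤ _ := ENNReal.ofReal_add_le
  calc (∑ j : Fin m, ENNReal.ofReal (|h (x j.succ) - h (x j.castSucc)| / l (β j)))
      ≤ ∑ j : Fin m, (ENNReal.ofReal (|h₁ (x j.succ) - h₁ (x j.castSucc)| / l (β j))
          + ENNReal.ofReal (|h₂ (x j.succ) - h₂ (x j.castSucc)| / l (β j))) :=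
        Finset.sum_le_sum fun j _ => hterm j
    _ = (∑ j : Fin m, ENNReal.ofReal (|h₁ (x j.succ) - h₁ (x j.castSucc)| / l (β j)))
        + ∑ j : Fin m, ENNReal.ofReal (|h₂ (x j.succ) - h₂ (x j.castSucc)| / l (β j)) :=
        Finset.sum_add_distrib
    _ ≤ _ := add_le_add (le_lamVarOn l h₁ _ x hx hK β) (le_lamVarOn l h₂ _ x hx hK β)

private lemma lamVar_le_of_lipschitz (l : ℕ → ℝ) (hpos : ∀ n, 0 < l n) (hmono : Monotone l)
    (g : ℝ → ℝ) (L : ℝ) (hL : 0 ≤ L)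
    (hg : ∀ u ∈ Icc (0:ℝ) 1, ∀ v ∈ Icc (0:ℝ) 1, |g u - g v| ≤ L * |u - v|) :
    lamVar l g ≤ ENNReal.ofReal (L / l 0) := by
  refine lamVarOn_le _ _ _ (fun m x hx hK β => ?_)
  have hl0 := hpos 0
  have hterm : ∀ j : Fin m, |g (x j.succ) - g (x j.castSucc)| / l (β j)
      ≤ L * (x j.succ - x j.castSucc) / l 0 := by
    intro j
    have h1 : |g (x j.succ) - g (x j.castSucc)| ≤ L * (x j.succ - x j.castSucc) := by
      have := hg _ (hK j.succ) _ (hK j.castSucc)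
      rwa [abs_of_nonneg (sub_nonneg.mpr (hx (Fin.castSucc_le_succ j)))] at this
    calc |g (x j.succ) - g (x j.castSucc)| / l (β j)
        ≤ |g (x j.succ) - g (x j.castSucc)| / l 0 :=
          div_le_div_of_nonneg_left (abs_nonneg _) hl0 (hmono (Nat.zero_le _))
      _ ≤ L * (x j.succ - x j.castSucc) / l 0 := div_le_div_of_nonneg_right h1 hl0.le
  have hnn : ∀ j ∈ (Finset.univ : Finset (Fin m)),
      (0:ℝ) ≤ L * (x j.succ - x j.castSucc) / l 0 := by
    intro j _
    have := sub_nonneg.mpr (hx (Fin.castSucc_le_succ j))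
    positivity
  calc (∑ j : Fin m, ENNReal.ofReal (|g (x j.succ) - g (x j.castSucc)| / l (β j)))
      ≤ ∑ j : Fin m, ENNReal.ofReal (L * (x j.succ - x j.castSucc) / l 0) :=
        Finset.sum_le_sum fun j _ => ENNReal.ofReal_le_ofReal (hterm j)
    _ = ENNReal.ofReal (∑ j : Fin m, L * (x j.succ - x j.castSucc) / l 0) :=
        (ENNReal.ofReal_sum_of_nonneg hnn).symm
    _ ≤ ENNReal.ofReal (L / l 0) := by
        apply ENNReal.ofReal_le_ofReal
        have hsum : (∑ j : Fin m, (x j.succ - x j.castSucc)) = x (Fin.last m) - x 0 := by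
          let X : ℕ → ℝ := fun i => x ⟨min i m, by omega⟩
          have h1 : ∀ j : Fin m, x j.succ = X (j.val + 1) := by
            intro j
            have : min (j.val + 1) m = j.val + 1 := min_eq_left (by omega)
            simp only [X, this]
            exact congrArg x (Fin.ext (by simp))
          have h2 : ∀ j : Fin m, x j.castSucc = X j.val := by
            intro j
            have : min j.val m = j.val := min_eq_left (by omega)
            simp only [X, this]
            exact congrArg x (Fin.ext (by simp))
          calc (∑ j : Fin m, (x j.succ - x j.castSucc))
              = ∑ j : Fin m, (X (j.val + 1) - X j.val) := by
                refine Finset.sum_congr rfl fun j _ => by rw [h1 j, h2 j]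
            _ = ∑ i ∈ Finset.range m, (X (i + 1) - X i) :=
                Fin.sum_univ_eq_sum_range (fun i => X (i+1) - X i) m
            _ = X m - X 0 := Finset.sum_range_sub X m
            _ = x (Fin.last m) - x 0 := by simp [X, Fin.last]
        rw [← Finset.sum_div, ← Finset.mul_sum, hsum]
        apply div_le_div_of_nonneg_right ?_ hl0.le
        have hx0 : (0:ℝ) ≤ x 0 := (hK 0).1
        have hx1 : x (Fin.last m) ≤ 1 := (hK (Fin.last m)).2
        nlinarith

private lemma lamVar_shift_le (l : ℕ → ℝ) (hpos : ∀ n, 0 < l n) (hmono : Monotone l)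
    (g : ℝ → ℝ) (m : ℕ) :
    lamVar (fun i => l (i + m)) g ≤ lamVar l g := by
  refine lamVarOn_le _ _ _ (fun M x hx hK β => ?_)
  refine le_trans (Finset.sum_le_sum fun j _ => ?_) (le_lamVarOn l g _ x hx hK β)
  exact ENNReal.ofReal_le_ofReal
    (div_le_div_of_nonneg_left (abs_nonneg _) (hpos _) (hmono (Nat.le_add_right _ _)))

private lemma lamVar_le_split (l : ℕ → ℝ) (hpos : ∀ n, 0 < l n) (hmono : Monotone l)
    (g : ℝ → ℝ) (m : ℕ) (S : ℝ) (hS : ∀ u ∈ Icc (0:ℝ) 1, |g u| ≤ S) :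
    lamVar l g ≤ ENNReal.ofReal (m * (2 * S) / l 0) + lamVar (fun i => l (i + m)) g := by
  classical
  have hS0 : 0 ≤ S := le_trans (abs_nonneg _) (hS 0 (by constructor <;> norm_num))
  refine lamVarOn_le _ _ _ (fun M x hx hK β => ?_)
  set c : Fin M → ℕ := fun j => if m ≤ (β j : ℕ) then (β j : ℕ) - m else (β j : ℕ) + M with hc
  have hcinj : Function.Injective c := by
    intro a b hab
    have ha := (β a).isLt
    have hb := (β b).isLt
    by_cases h1 : m ≤ (β a : ℕ) <;> by_cases h2 : m ≤ (β b : ℕ) <;>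
      simp only [hc, h1, h2, if_pos, if_neg, if_true, if_false] at hab <;>
      first
      | (exact β.injective (Fin.ext (by omega)))
      | omega
  obtain ⟨e, he⟩ := exists_perm_le M c hcinj
  have key : ∀ j : Fin M, m ≤ (β j : ℕ) →
      |g (x j.succ) - g (x j.castSucc)| / l (β j)
        ≤ |g (x j.succ) - g (x j.castSucc)| / l ((e j : ℕ) + m) := by
    intro j hj
    apply div_le_div_of_nonneg_left (abs_nonneg _) (hpos _)
    apply hmono
    have := he j
    simp only [hc, if_pos hj] at this
    omega
  rw [← Finset.sum_filter_add_sum_filter_not Finset.univ (fun j => (β j : ℕ) < m)]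
  gcongr ?_ + ?_
  · have hcard : (Finset.univ.filter (fun j : Fin M => (β j : ℕ) < m)).card ≤ m := by
      have h := Finset.card_le_card_of_injOn
        (s := Finset.univ.filter (fun j : Fin M => (β j : ℕ) < m))
        (t := Finset.range m) (fun j => (β j : ℕ))
        (fun a ha => by simpa using ha)
        (fun a _ b _ hab => β.injective (Fin.ext hab))
      simpa using h
    have hterm : ∀ j : Fin M, ENNReal.ofReal (|g (x j.succ) - g (x j.castSucc)| / l (β j))
        ≤ ENNReal.ofReal (2 * S / l 0) := by
      intro j
      apply ENNReal.ofReal_le_ofReal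
      have h1 : |g (x j.succ) - g (x j.castSucc)| ≤ 2 * S := by
        have := hS _ (hK j.succ)
        have := hS _ (hK j.castSucc)
        calc |g (x j.succ) - g (x j.castSucc)| ≤ |g (x j.succ)| + |g (x j.castSucc)| :=
            abs_sub _ _
          _ ≤ 2 * S := by linarith
      calc |g (x j.succ) - g (x j.castSucc)| / l (β j)
          ≤ |g (x j.succ) - g (x j.castSucc)| / l 0 :=
            div_le_div_of_nonneg_left (abs_nonneg _) (hpos _) (hmono (Nat.zero_le _))
        _ ≤ 2 * S / l 0 := div_le_div_of_nonneg_right h1 (hpos 0).le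
    calc (∑ j ∈ Finset.univ.filter (fun j : Fin M => (β j : ℕ) < m),
            ENNReal.ofReal (|g (x j.succ) - g (x j.castSucc)| / l (β j)))
        ≤ ∑ _j ∈ Finset.univ.filter (fun j : Fin M => (β j : ℕ) < m),
            ENNReal.ofReal (2 * S / l 0) := Finset.sum_le_sum fun j _ => hterm j
      _ = (Finset.univ.filter (fun j : Fin M => (β j : ℕ) < m)).card
            • ENNReal.ofReal (2 * S / l 0) := by rw [Finset.sum_const]
      _ ≤ m • ENNReal.ofReal (2 * S / l 0) := nsmul_le_nsmul_left (by simp) hcard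
      _ = ENNReal.ofReal (m * (2 * S) / l 0) := by
          rw [nsmul_eq_mul, ← ENNReal.ofReal_natCast m,
            ← ENNReal.ofReal_mul (by positivity)]
          congr 1
          ring
  · calc (∑ j ∈ Finset.univ.filter (fun j : Fin M => ¬ (β j : ℕ) < m),
            ENNReal.ofReal (|g (x j.succ) - g (x j.castSucc)| / l (β j)))
        ≤ ∑ j ∈ Finset.univ.filter (fun j : Fin M => ¬ (β j : ℕ) < m),
            ENNReal.ofReal (|g (x j.succ) - g (x j.castSucc)| / l ((e j : ℕ) + m)) := by
          refine Finset.sum_le_sum fun j hj => ?_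
          have hj' : m ≤ (β j : ℕ) := by simpa using (Finset.mem_filter.mp hj).2
          exact ENNReal.ofReal_le_ofReal (key j hj')
      _ ≤ ∑ j : Fin M,
            ENNReal.ofReal (|g (x j.succ) - g (x j.castSucc)| / l ((e j : ℕ) + m)) :=
          Finset.sum_le_sum_of_subset (Finset.filter_subset _ _)
      _ ≤ lamVar (fun i => l (i + m)) g := le_lamVarOn (fun i => l (i + m)) g _ x hx hK e

private lemma binom_expectation {A : Type*} [Fintype A] [DecidableEq A] (d : A → ℝ)
    (T : Finset A) (φ : ℕ → ℝ) (n : ℕ) :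
    ∑ ω : Fin n → A, (∏ i, d (ω i)) * φ ((Finset.univ.filter (fun i => ω i ∈ T)).card)
      = ∑ k ∈ Finset.range (n+1),
          (n.choose k : ℝ) * (∑ a ∈ T, d a)^k * (∑ a ∈ Tᶜ, d a)^(n-k) * φ k := by
  classical
  induction n generalizing φ with
  | zero =>
    simp
  | succ n ih =>
    set p := ∑ a ∈ T, d a with hp
    set q := ∑ a ∈ Tᶜ, d a with hq
    have hsum : ∑ ω : Fin (n+1) → A,
          (∏ i, d (ω i)) * φ ((Finset.univ.filter (fun i => ω i ∈ T)).card)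
        = ∑ a : A, ∑ ω : Fin n → A,
            (d a * ∏ i, d (ω i)) *
              φ ((if a ∈ T then 1 else 0) + (Finset.univ.filter (fun i => ω i ∈ T)).card) := by
      rw [← (Fin.consEquiv (fun _ : Fin (n+1) => A)).sum_comp, Fintype.sum_prod_type]
      refine Finset.sum_congr rfl fun a _ => Finset.sum_congr rfl fun ω _ => ?_
      have h1 : ∀ i : Fin n, (Fin.consEquiv (fun _ : Fin (n+1) => A)) (a, ω) i.succ = ω i := by
        intro i; simp [Fin.consEquiv]
      have h0 : (Fin.consEquiv (fun _ : Fin (n+1) => A)) (a, ω) 0 = a := by simp [Fin.consEquiv]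
      have hprod : (∏ i : Fin (n+1), d ((Fin.consEquiv (fun _ : Fin (n+1) => A)) (a, ω) i))
          = d a * ∏ i : Fin n, d (ω i) := by
        rw [Fin.prod_univ_succ, h0]
        exact congrArg _ (Finset.prod_congr rfl fun i _ => by rw [h1 i])
      have hcard : (Finset.univ.filter (fun i => (Fin.consEquiv (fun _ : Fin (n+1) => A)) (a, ω) i ∈ T)).card
          = (if a ∈ T then 1 else 0) + (Finset.univ.filter (fun i => ω i ∈ T)).card := by
        rw [Finset.card_filter, Finset.card_filter, Fin.sum_univ_succ, h0]
        simp only [h1]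
      rw [hprod, hcard]
    rw [hsum]
    have hsplit : ∑ a : A, ∑ ω : Fin n → A,
          (d a * ∏ i, d (ω i)) *
            φ ((if a ∈ T then 1 else 0) + (Finset.univ.filter (fun i => ω i ∈ T)).card)
        = p * (∑ ω : Fin n → A,
              (∏ i, d (ω i)) * φ ((Finset.univ.filter (fun i => ω i ∈ T)).card + 1))
          + q * (∑ ω : Fin n → A,
              (∏ i, d (ω i)) * φ ((Finset.univ.filter (fun i => ω i ∈ T)).card)) := by
      rw [← Finset.sum_add_sum_compl T]
      congr 1
      · rw [hp, Finset.sum_mul]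
        refine Finset.sum_congr rfl fun a ha => ?_
        rw [Finset.mul_sum]
        refine Finset.sum_congr rfl fun ω _ => by rw [if_pos ha]; ring_nf
      · rw [hq, Finset.sum_mul]
        refine Finset.sum_congr rfl fun a ha => ?_
        rw [Finset.mul_sum]
        have ha' : a ∉ T := by simpa using ha
        refine Finset.sum_congr rfl fun ω _ => by rw [if_neg ha']; ring_nf
    rw [hsplit, ih (fun k => φ (k+1)), ih φ]
    rw [Finset.mul_sum, Finset.mul_sum]
    have e1 : ∀ k ∈ Finset.range (n+1),
        p * ((n.choose k : ℝ) * p^k * q^(n-k) * φ (k+1))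
          = (n.choose k : ℝ) * p^(k+1) * q^(n-k) * φ (k+1) := fun k _ => by ring
    have e2 : ∀ k ∈ Finset.range (n+1),
        q * ((n.choose k : ℝ) * p^k * q^(n-k) * φ k)
          = (n.choose k : ℝ) * p^k * q^(n-k+1) * φ k := fun k hk => by
      have h3 : n - k + 1 = (n - k) + 1 := rfl
      rw [h3, pow_succ]
      ring
    rw [Finset.sum_congr rfl e1, Finset.sum_congr rfl e2]
    rw [Finset.sum_range_succ' (fun k => ((n+1).choose k : ℝ) * p^k * q^(n+1-k) * φ k) (n+1)]
    rw [Finset.sum_range_succ' (fun k => (n.choose k : ℝ) * p^k * q^(n-k+1) * φ k) n]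
    have main : ∑ k ∈ Finset.range (n+1), (n.choose k : ℝ) * p^(k+1) * q^(n-k) * φ (k+1)
          + ∑ k ∈ Finset.range n, (n.choose (k+1) : ℝ) * p^(k+1) * q^(n-(k+1)+1) * φ (k+1)
        = ∑ k ∈ Finset.range (n+1),
            ((n+1).choose (k+1) : ℝ) * p^(k+1) * q^(n+1-(k+1)) * φ (k+1) := by
      have hext : ∑ k ∈ Finset.range n, (n.choose (k+1) : ℝ) * p^(k+1) * q^(n-(k+1)+1) * φ (k+1)
          = ∑ k ∈ Finset.range (n+1),
              (n.choose (k+1) : ℝ) * p^(k+1) * q^(n-(k+1)+1) * φ (k+1) := by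
        rw [Finset.sum_range_succ]
        simp
      rw [hext, ← Finset.sum_add_distrib]
      refine Finset.sum_congr rfl fun k hk => ?_
      have hk' : k ≤ n := by simpa [Nat.lt_succ_iff] using hk
      have hc : ((n+1).choose (k+1) : ℝ) = (n.choose k : ℝ) + (n.choose (k+1) : ℝ) := by
        rw [← Nat.cast_add, Nat.choose_succ_succ]
      have hq1 : n + 1 - (k+1) = n - k := by omega
      by_cases hkn : k = n
      · subst hkn
        simp [Nat.choose_succ_self]
      · have hklt : k < n := lt_of_le_of_ne hk' hkn
        have hq2 : n - (k+1) + 1 = n - k := by omega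
        rw [hc, hq1, hq2]
        ring
    calc ∑ k ∈ Finset.range (n+1), (n.choose k : ℝ) * p^(k+1) * q^(n-k) * φ (k+1)
          + ((∑ k ∈ Finset.range n, (n.choose (k+1) : ℝ) * p^(k+1) * q^(n-(k+1)+1) * φ (k+1))
            + (n.choose 0 : ℝ) * p^0 * q^(n-0+1) * φ 0)
        = (∑ k ∈ Finset.range (n+1), (n.choose k : ℝ) * p^(k+1) * q^(n-k) * φ (k+1)
            + ∑ k ∈ Finset.range n, (n.choose (k+1) : ℝ) * p^(k+1) * q^(n-(k+1)+1) * φ (k+1))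
          + (n.choose 0 : ℝ) * p^0 * q^(n-0+1) * φ 0 := by ring
      _ = ∑ k ∈ Finset.range (n+1), ((n+1).choose (k+1) : ℝ) * p^(k+1) * q^(n+1-(k+1)) * φ (k+1)
          + ((n+1).choose 0 : ℝ) * p^0 * q^(n+1-0) * φ 0 := by
          rw [main]
          congr 1
          simp
      _ = _ := by ring

private lemma lamVar_bern_le (l : ℕ → ℝ) (hpos : ∀ n, 0 < l n) (f : ℝ → ℝ) (n : ℕ) :
    lamVar l (bern n f) ≤ lamVar l f := by
  classical
  refine lamVarOn_le _ _ _ (fun m x hx hK β => ?_)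
  set G : ℕ → ℝ := fun t => if t = 0 then 0 else if t ≤ m + 1 then
      x ⟨min (t-1) m, Nat.lt_succ_of_le (min_le_right _ _)⟩ else 1 with hGdef
  have hG0 : G 0 = 0 := by simp [hGdef]
  have hGtop : G (m + 2) = 1 := by simp [hGdef]
  have hGx : ∀ j : Fin (m+1), G (j.val + 1) = x j := by
    intro j
    have h1 : j.val + 1 ≠ 0 := by omega
    have h2 : j.val + 1 ≤ m + 1 := by omega
    have h3 : min (j.val + 1 - 1) m = j.val := by omega
    simp only [hGdef, if_neg h1, if_pos h2]
    exact congrArg x (Fin.ext h3)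
  have hx0 : ∀ j, (0:ℝ) ≤ x j := fun j => (hK j).1
  have hx1 : ∀ j, x j ≤ 1 := fun j => (hK j).2
  have hGmono : Monotone G := by
    intro a b hab
    rcases Nat.eq_zero_or_pos a with ha | ha
    · subst ha
      rw [hG0]
      simp only [hGdef]
      split_ifs with h1 h2
      · exact le_rfl
      · exact hx0 _
      · norm_num
    · have ha' : a ≠ 0 := by omega
      have hb' : b ≠ 0 := by omega
      by_cases h2 : b ≤ m + 1
      · have h1 : a ≤ m + 1 := le_trans hab h2
        simp only [hGdef, if_neg ha', if_neg hb', if_pos h1, if_pos h2]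
        exact hx (by simp [Fin.mk_le_mk]; omega)
      · by_cases h1 : a ≤ m + 1
        · simp only [hGdef, if_neg ha', if_neg hb', if_pos h1, if_neg h2]
          exact hx1 _
        · simp only [hGdef, if_neg ha', if_neg hb', if_neg h1, if_neg h2]
          exact le_rfl
  set d : Fin (m+2) → ℝ := fun t => G (t.val + 1) - G t.val with hddef
  have hd : ∀ t, 0 ≤ d t := fun t => sub_nonneg.mpr (hGmono (Nat.le_succ _))
  set W : (Fin n → Fin (m+2)) → ℝ := fun ω => ∏ i, d (ω i) with hWdef
  have hW : ∀ ω, 0 ≤ W ω := fun ω => Finset.prod_nonneg fun i _ => hd _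
  set N : (Fin n → Fin (m+2)) → Fin (m+1) → ℕ :=
    fun ω j => (Finset.univ.filter (fun i => (ω i : ℕ) ≤ (j : ℕ))).card with hNdef
  set y : (Fin n → Fin (m+2)) → Fin (m+1) → ℝ := fun ω j => (N ω j : ℝ) / n with hydef
  have hNle : ∀ ω j, N ω j ≤ n := fun ω j => le_trans (Finset.card_filter_le _ _) (by simp)
  have hymono : ∀ ω, Monotone (y ω) := by
    intro ω j1 j2 h12
    have hsub : N ω j1 ≤ N ω j2 := by
      apply Finset.card_le_card
      apply Finset.monotone_filter_right
      intro i _ hi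
      exact le_trans hi (by exact_mod_cast h12)
    apply div_le_div_of_nonneg_right (by exact_mod_cast hsub) (by positivity)
  have hyIcc : ∀ ω j, y ω j ∈ Icc (0:ℝ) 1 := by
    intro ω j
    constructor
    · exact div_nonneg (Nat.cast_nonneg _) (Nat.cast_nonneg _)
    · apply div_le_one_of_le₀
      · exact_mod_cast hNle ω j
      · positivity
  have hsum_range : ∀ s, s ≤ m + 2 →
      ∑ t ∈ Finset.univ.filter (fun t : Fin (m+2) => (t:ℕ) < s), d t = G s := by
    intro s hs
    have h1 : ∑ t ∈ Finset.univ.filter (fun t : Fin (m+2) => (t:ℕ) < s), d t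
        = ∑ t : Fin (m+2), (if (t:ℕ) < s then (G (t.val + 1) - G t.val) else 0) := by
      rw [Finset.sum_filter]
    rw [h1, Fin.sum_univ_eq_sum_range (fun i => if i < s then (G (i+1) - G i) else 0) (m+2),
      ← Finset.sum_filter]
    have h2 : (Finset.range (m+2)).filter (fun i => i < s) = Finset.range s := by
      ext i
      simp only [Finset.mem_filter, Finset.mem_range]
      omega
    rw [h2, Finset.sum_range_sub G s, hG0, sub_zero]
  set Tj : Fin (m+1) → Finset (Fin (m+2)) :=
    fun j => Finset.univ.filter (fun t : Fin (m+2) => (t:ℕ) ≤ (j:ℕ)) with hTjdef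
  have hTsum : ∀ j, ∑ t ∈ Tj j, d t = x j := by
    intro j
    have h4 : Tj j = Finset.univ.filter (fun t : Fin (m+2) => (t:ℕ) < (j:ℕ) + 1) := by
      apply Finset.filter_congr
      intro t _
      simp [Nat.lt_succ_iff]
    rw [h4, hsum_range ((j:ℕ)+1) (by omega), hGx]
  have hTot : ∑ t : Fin (m+2), d t = 1 := by
    have h5 := hsum_range (m+2) le_rfl
    rw [hGtop] at h5
    rw [← h5]
    apply Finset.sum_congr ?_ (fun _ _ => rfl)
    ext t
    simp [t.isLt]
  have hQsum : ∀ j, ∑ t ∈ (Tj j)ᶜ, d t = 1 - x j := by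
    intro j
    have h6 := Finset.sum_add_sum_compl (Tj j) d
    rw [hTsum j, hTot] at h6
    linarith
  have hB : ∀ j : Fin (m+1), bern n f (x j) = ∑ ω : Fin n → Fin (m+2), W ω * f (y ω j) := by
    intro j
    have key := binom_expectation d (Tj j) (fun k => f ((k : ℝ) / n)) n
    have hpred : ∀ ω : Fin n → Fin (m+2),
        (Finset.univ.filter (fun i => ω i ∈ Tj j)) =
          (Finset.univ.filter (fun i => (ω i : ℕ) ≤ (j : ℕ))) := by
      intro ω
      apply Finset.filter_congr
      intro i _
      simp [hTjdef]
    rw [hTsum j, hQsum j] at key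
    calc bern n f (x j)
        = ∑ k ∈ Finset.range (n+1),
            (n.choose k : ℝ) * (x j)^k * (1 - x j)^(n-k) * f ((k : ℝ)/n) := by
          unfold bern
          exact Finset.sum_congr rfl fun k _ => by ring
      _ = ∑ ω : Fin n → Fin (m+2), (∏ i, d (ω i)) *
            f (((Finset.univ.filter (fun i => ω i ∈ Tj j)).card : ℝ) / n) := key.symm
      _ = ∑ ω : Fin n → Fin (m+2), W ω * f (y ω j) := by
          refine Finset.sum_congr rfl fun ω _ => ?_
          rw [hpred ω]
  have hofW : ∑ ω : Fin n → Fin (m+2), ENNReal.ofReal (W ω) = 1 := by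
    rw [← ENNReal.ofReal_sum_of_nonneg (fun ω _ => hW ω)]
    have h7 : ∑ ω : Fin n → Fin (m+2), W ω = 1 := by
      have key := binom_expectation d (Tj 0) (fun _ => (1:ℝ)) n
      rw [hTsum 0, hQsum 0] at key
      have h2 : ∑ k ∈ Finset.range (n+1), (n.choose k : ℝ) * (x 0)^k * (1 - x 0)^(n-k) * 1
          = ((x 0) + (1 - x 0))^n := by
        rw [add_pow]
        exact Finset.sum_congr rfl fun k _ => by ring
      simp only [mul_one] at key h2 ⊢
      rw [key, h2]
      norm_num
    rw [h7, ENNReal.ofReal_one]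
  calc (∑ j : Fin m, ENNReal.ofReal (|bern n f (x j.succ) - bern n f (x j.castSucc)| / l (β j)))
      ≤ ∑ j : Fin m, ∑ ω : Fin n → Fin (m+2),
          ENNReal.ofReal (W ω)
            * ENNReal.ofReal (|f (y ω j.succ) - f (y ω j.castSucc)| / l (β j)) := by
        refine Finset.sum_le_sum fun j _ => ?_
        have hdiff : bern n f (x j.succ) - bern n f (x j.castSucc)
            = ∑ ω : Fin n → Fin (m+2), W ω * (f (y ω j.succ) - f (y ω j.castSucc)) := by
          rw [hB j.succ, hB j.castSucc, ← Finset.sum_sub_distrib]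
          exact Finset.sum_congr rfl fun ω _ => by ring
        have habs : |bern n f (x j.succ) - bern n f (x j.castSucc)|
            ≤ ∑ ω : Fin n → Fin (m+2), W ω * |f (y ω j.succ) - f (y ω j.castSucc)| := by
          rw [hdiff]
          refine le_trans (Finset.abs_sum_le_sum_abs _ _) ?_
          refine Finset.sum_le_sum fun ω _ => ?_
          rw [abs_mul, abs_of_nonneg (hW ω)]
        have hdivle : |bern n f (x j.succ) - bern n f (x j.castSucc)| / l (β j)
            ≤ ∑ ω : Fin n → Fin (m+2),
                W ω * (|f (y ω j.succ) - f (y ω j.castSucc)| / l (β j)) := by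
          have h2 : (∑ ω : Fin n → Fin (m+2),
                W ω * |f (y ω j.succ) - f (y ω j.castSucc)|) / l (β j)
              = ∑ ω : Fin n → Fin (m+2),
                W ω * (|f (y ω j.succ) - f (y ω j.castSucc)| / l (β j)) := by
            rw [Finset.sum_div]
            exact Finset.sum_congr rfl fun ω _ => by rw [mul_div_assoc]
          rw [← h2]
          exact div_le_div_of_nonneg_right habs (hpos _).le
        calc ENNReal.ofReal (|bern n f (x j.succ) - bern n f (x j.castSucc)| / l (β j))
            ≤ ENNReal.ofReal (∑ ω : Fin n → Fin (m+2),
                W ω * (|f (y ω j.succ) - f (y ω j.castSucc)| / l (β j))) :=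
              ENNReal.ofReal_le_ofReal hdivle
          _ = ∑ ω : Fin n → Fin (m+2),
                ENNReal.ofReal (W ω * (|f (y ω j.succ) - f (y ω j.castSucc)| / l (β j))) :=
              ENNReal.ofReal_sum_of_nonneg fun ω _ => by
                have := hW ω
                have := abs_nonneg (f (y ω j.succ) - f (y ω j.castSucc))
                have := (hpos (β j)).le
                positivity
          _ = ∑ ω : Fin n → Fin (m+2),
                ENNReal.ofReal (W ω)
                  * ENNReal.ofReal (|f (y ω j.succ) - f (y ω j.castSucc)| / l (β j)) :=
              Finset.sum_congr rfl fun ω _ => ENNReal.ofReal_mul (hW ω)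
    _ = ∑ ω : Fin n → Fin (m+2), ENNReal.ofReal (W ω) *
          ∑ j : Fin m, ENNReal.ofReal (|f (y ω j.succ) - f (y ω j.castSucc)| / l (β j)) := by
        rw [Finset.sum_comm]
        exact Finset.sum_congr rfl fun ω _ => (Finset.mul_sum _ _ _).symm
    _ ≤ ∑ ω : Fin n → Fin (m+2), ENNReal.ofReal (W ω) * lamVar l f := by
        refine Finset.sum_le_sum fun ω _ => ?_
        exact mul_le_mul_right (le_lamVarOn l f _ (y ω) (hymono ω) (hyIcc ω) β) _
    _ = lamVar l f := by
        rw [← Finset.sum_mul, hofW, one_mul]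

private lemma bern_zero_eq (n : ℕ) (f : ℝ → ℝ) : bern n f 0 = f 0 := by
  unfold bern
  rw [Finset.sum_eq_single 0]
  · simp
  · intro k _ hk
    simp [zero_pow hk]
  · simp

private lemma bern_continuous (n : ℕ) (f : ℝ → ℝ) : Continuous (bern n f) := by
  unfold bern
  apply continuous_finset_sum
  intro k _
  fun_prop

private lemma bern_contDiff (n : ℕ) (f : ℝ → ℝ) : ContDiff ℝ 1 (bern n f) := by
  unfold bern
  apply ContDiff.sum
  intro k _
  apply ContDiff.mul
  apply ContDiff.mul
  · exact contDiff_const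
  · exact contDiff_id.pow _
  · exact (contDiff_const.sub contDiff_id).pow _

private lemma bern_lipschitz (n : ℕ) (f : ℝ → ℝ) :
    ∃ L : ℝ, 0 ≤ L ∧ ∀ u ∈ Icc (0:ℝ) 1, ∀ v ∈ Icc (0:ℝ) 1,
      |bern n f u - bern n f v| ≤ L * |u - v| := by
  have hcd := bern_contDiff n f
  have hder : Continuous (deriv (bern n f)) := hcd.continuous_deriv le_rfl
  obtain ⟨C, hC⟩ := isCompact_Icc.exists_bound_of_continuousOn
    (hder.continuousOn : ContinuousOn (deriv (bern n f)) (Icc (0:ℝ) 1))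
  refine ⟨max C 0, le_max_right _ _, fun u hu v hv => ?_⟩
  have := Convex.norm_image_sub_le_of_norm_deriv_le
    (f := bern n f) (s := Icc (0:ℝ) 1) (C := max C 0)
    (fun x _ => (hcd.differentiable one_ne_zero).differentiableAt)
    (fun x hx => le_trans (hC x hx) (le_max_left _ _)) (convex_Icc _ _) hv hu
  simpa [Real.norm_eq_abs] using this

open scoped unitInterval in
private lemma bernsteinApprox_eq (f : ℝ → ℝ) (F : C(I, ℝ)) (hF : ∀ p : I, F p = f (p : ℝ))
    (n : ℕ) (x : I) : bernsteinApproximation n F x = bern n f (x : ℝ) := by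
  have h1 : bernsteinApproximation n F x
      = ∑ k : Fin (n+1), F (bernstein.z k) * bernstein n k x := by
    simp [bernsteinApproximation]
    exact Finset.sum_congr rfl fun k _ => mul_comm _ _
  rw [h1]
  unfold bern
  rw [← Fin.sum_univ_eq_sum_range (fun k =>
    f ((k : ℝ) / n) * (n.choose k : ℝ) * (x:ℝ) ^ k * (1 - (x:ℝ)) ^ (n - k)) (n+1)]
  refine Finset.sum_congr rfl fun k _ => ?_
  rw [hF (bernstein.z k), bernstein_apply]
  have hz : ((bernstein.z k : I) : ℝ) = (k : ℝ) / n := rfl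
  rw [hz]
  ring

private lemma abs_le_lamVar (l : ℕ → ℝ) (g : ℝ → ℝ) {u v : ℝ}
    (hu : u ∈ Icc (0:ℝ) 1) (hv : v ∈ Icc (0:ℝ) 1) (huv : u ≤ v) :
    ENNReal.ofReal (|g v - g u| / l 0) ≤ lamVar l g := by
  have h := le_lamVarOn l g (Set.Icc 0 1) (m := 1) ![u, v]
    (by
      intro a b hab
      fin_cases a <;> fin_cases b <;>
        simp_all [huv, le_rfl] <;> omega)
    (by intro j; fin_cases j <;> simpa)
    (Equiv.refl _)
  simpa [lamVar] using h
end LamVarAux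

/-- If `Λ` is a proper Λ-sequence and `f : [0,1] → ℝ`, then
`‖B_n f - f‖_Λ → 0` if and only if `f` is continuous, of bounded Λ-variation, and
continuous in Λ-variation. -/
theorem bernstein_lamNorm_convergence_iff (l : ℕ → ℝ) (hl : IsProperLambdaSeq l)
    (f : ℝ → ℝ) :
    Tendsto (fun n => lamNorm l (fun x => bern n f x - f x)) atTop (𝓝 0) ↔
      (ContinuousOn f (Set.Icc 0 1) ∧ lamVar l f < ⊤ ∧ ContInLamVar l f) := by
  obtain ⟨⟨hmono, hpos, _⟩, htop⟩ := hl
  have hnorm_eq : ∀ n : ℕ, lamNorm l (fun x => bern n f x - f x)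
      = lamVar l (fun x => bern n f x - f x) := fun n => by
    simp [lamNorm, bern_zero_eq]
  constructor
  · intro h
    have hvar : Tendsto (fun n => lamVar l (fun x => bern n f x - f x)) atTop (𝓝 0) := by
      simp only [hnorm_eq] at h
      exact h
    -- (1) continuity
    have hunif : TendstoUniformlyOn (fun n x => bern n f x) f atTop (Icc 0 1) := by
      rw [Metric.tendstoUniformlyOn_iff]
      intro ε hε
      have hc : (0:ℝ≥0∞) < ENNReal.ofReal (ε / l 0) :=
        ENNReal.ofReal_pos.mpr (div_pos hε (hpos 0))
      filter_upwards [hvar.eventually_lt_const hc] with n hn x hx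
      have h0 : (0:ℝ) ∈ Icc (0:ℝ) 1 := by constructor <;> norm_num
      have hb := abs_le_lamVar l (fun x => bern n f x - f x) h0 hx hx.1
      have hlt : ENNReal.ofReal (|(bern n f x - f x) - (bern n f 0 - f 0)| / l 0)
          < ENNReal.ofReal (ε / l 0) := lt_of_le_of_lt hb hn
      have hg00 : bern n f 0 - f 0 = 0 := by simp [bern_zero_eq]
      rw [hg00, sub_zero] at hlt
      have hlt2 : |bern n f x - f x| / l 0 < ε / l 0 :=
        (ENNReal.ofReal_lt_ofReal_iff (div_pos hε (hpos 0))).mp hlt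
      have hl0 := hpos 0
      rw [div_lt_div_iff₀ hl0 hl0] at hlt2
      have hlt3 : |bern n f x - f x| < ε := by nlinarith
      have : dist (f x) (bern n f x) = |bern n f x - f x| := by
        rw [Real.dist_eq, abs_sub_comm]
      rw [this]
      exact hlt3
    have hcont : ContinuousOn f (Icc 0 1) :=
      hunif.continuousOn (Filter.Eventually.of_forall fun n => (bern_continuous n f).continuousOn).frequently
    -- (2) bounded variation
    have hfin : lamVar l f < ⊤ := by
      obtain ⟨n, hn⟩ := (hvar.eventually_lt_const (by norm_num : (0:ℝ≥0∞) < 1)).exists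
      obtain ⟨L, hL0, hLip⟩ := bern_lipschitz n f
      have htri : lamVar l f ≤ lamVar l (bern n f) + lamVar l (fun x => bern n f x - f x) :=
        lamVar_le_add l hpos f (bern n f) _ (fun u _ v _ => by
          have h1 : f u - f v
              = (bern n f u - bern n f v) - ((bern n f u - f u) - (bern n f v - f v)) := by ring
          rw [h1]
          exact abs_sub _ _)
      refine lt_of_le_of_lt htri ?_
      apply ENNReal.add_lt_top.mpr
      constructor
      · exact lt_of_le_of_lt (lamVar_le_of_lipschitz l hpos hmono _ L hL0 hLip)
          ENNReal.ofReal_lt_top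
      · exact lt_trans hn ENNReal.one_lt_top
    -- (3) continuity in Λ-variation
    have hCV : ContInLamVar l f := by
      rw [ContInLamVar, ENNReal.tendsto_atTop_zero]
      intro ε hε
      set ε' := min ε 1 with hε'def
      have hε'pos : 0 < ε' := lt_min hε (by norm_num)
      have hε'top : ε' ≠ ⊤ := ne_top_of_le_ne_top ENNReal.one_ne_top (min_le_right _ _)
      have hhalfpos : 0 < ε' / 2 := ENNReal.div_pos hε'pos.ne' (by norm_num)
      have hhalftop : ε' / 2 ≠ ⊤ := (ENNReal.div_lt_top hε'top (by norm_num)).ne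
      obtain ⟨n, hn⟩ := (hvar.eventually_lt_const hhalfpos).exists
      obtain ⟨L, hL0, hLip⟩ := bern_lipschitz n f
      set r := (ε' / 2).toReal with hrdef
      have hr : 0 < r := ENNReal.toReal_pos hhalfpos.ne' hhalftop
      obtain ⟨M, hM⟩ := Filter.eventually_atTop.mp (Filter.tendsto_atTop.mp htop (L / r + 1))
      refine ⟨M, fun m hm => ?_⟩
      have hlm : L / r + 1 ≤ l m := hM m hm
      have hlmpos : 0 < l m := lt_of_lt_of_le (by positivity) hlm
      have hshiftpos : ∀ i, 0 < l (i + m) := fun i => hpos _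
      have hshiftmono : Monotone (fun i => l (i + m)) := fun a b hab => hmono (by omega)
      have htri : lamVar (fun i => l (i+m)) f
          ≤ lamVar (fun i => l (i+m)) (bern n f)
            + lamVar (fun i => l (i+m)) (fun x => bern n f x - f x) :=
        lamVar_le_add _ hshiftpos f (bern n f) _ (fun u _ v _ => by
          have h1 : f u - f v
              = (bern n f u - bern n f v) - ((bern n f u - f u) - (bern n f v - f v)) := by ring
          rw [h1]
          exact abs_sub _ _)
      have h1 : lamVar (fun i => l (i+m)) (bern n f) ≤ ENNReal.ofReal (L / l m) := by
        have h2 := lamVar_le_of_lipschitz (fun i => l (i+m)) hshiftpos hshiftmono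
          (bern n f) L hL0 hLip
        simpa using h2
      have h2 : ENNReal.ofReal (L / l m) ≤ ε' / 2 := by
        have hle : L / l m ≤ r := by
          rw [div_le_iff₀ hlmpos]
          have h3 : r * (L / r) = L := by field_simp
          nlinarith [mul_le_mul_of_nonneg_left hlm hr.le]
        calc ENNReal.ofReal (L / l m) ≤ ENNReal.ofReal r := ENNReal.ofReal_le_ofReal hle
          _ = ε' / 2 := ENNReal.ofReal_toReal hhalftop
      have h3 : lamVar (fun i => l (i+m)) (fun x => bern n f x - f x) ≤ ε' / 2 :=
        le_trans (lamVar_shift_le l hpos hmono _ m) hn.le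
      calc lamVar (fun i => l (i+m)) f
          ≤ lamVar (fun i => l (i+m)) (bern n f)
            + lamVar (fun i => l (i+m)) (fun x => bern n f x - f x) := htri
        _ ≤ ε'/2 + ε'/2 := add_le_add (le_trans h1 h2) h3
        _ = ε' := ENNReal.add_halves _
        _ ≤ ε := min_le_left _ _
    exact ⟨hcont, hfin, hCV⟩
  · rintro ⟨hcont, _hBV, hCV⟩
    set F : C(unitInterval, ℝ) := ⟨(Set.Icc (0:ℝ) 1).restrict f, hcont.restrict⟩ with hFdef
    have hFf : ∀ p : unitInterval, F p = f (p : ℝ) := fun p => rfl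
    have hBA : ∀ (n : ℕ) (x : unitInterval), bernsteinApproximation n F x = bern n f (x:ℝ) :=
      fun n x => bernsteinApprox_eq f F hFf n x
    have hsup : ∀ (n : ℕ), ∀ u ∈ Icc (0:ℝ) 1,
        |bern n f u - f u| ≤ ‖bernsteinApproximation n F - F‖ := by
      intro n u hu
      have h1 : (bernsteinApproximation n F - F) ⟨u, hu⟩ = bern n f u - f u := by
        rw [ContinuousMap.sub_apply, hBA n ⟨u, hu⟩, hFf ⟨u, hu⟩]
      calc |bern n f u - f u| = ‖(bernsteinApproximation n F - F) ⟨u, hu⟩‖ := by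
            rw [h1, Real.norm_eq_abs]
        _ ≤ ‖bernsteinApproximation n F - F‖ := ContinuousMap.norm_coe_le_norm _ _
    simp only [hnorm_eq]
    rw [ENNReal.tendsto_atTop_zero]
    intro ε hε
    set ε' := min ε 1 with hε'def
    have hε'pos : 0 < ε' := lt_min hε (by norm_num)
    have hε'top : ε' ≠ ⊤ := ne_top_of_le_ne_top ENNReal.one_ne_top (min_le_right _ _)
    set δ := ε' / 2 with hδdef
    have hδpos : 0 < δ := ENNReal.div_pos hε'pos.ne' (by norm_num)
    have hδtop : δ ≠ ⊤ := (ENNReal.div_lt_top hε'top (by norm_num)).ne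
    obtain ⟨m, hm⟩ :=
      (hCV.eventually_lt_const (ENNReal.div_pos hδpos.ne' (ENNReal.ofNat_ne_top (n := 2)))).exists
    have hδr : 0 < δ.toReal := ENNReal.toReal_pos hδpos.ne' hδtop
    set ρ := (δ.toReal * l 0) / (2 * ((m:ℝ)+1)) with hρdef
    have hρpos : 0 < ρ := by
      have := hpos 0
      positivity
    obtain ⟨N, hN⟩ := Metric.tendsto_atTop.mp (bernsteinApproximation_uniform F) ρ hρpos
    refine ⟨N, fun n hn => ?_⟩
    set S := ‖bernsteinApproximation n F - F‖ with hSdef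
    have hSρ : S < ρ := by
      have h2 := hN n hn
      rwa [dist_eq_norm] at h2
    have hS0 : 0 ≤ S := norm_nonneg _
    have hsplit := lamVar_le_split l hpos hmono (fun x => bern n f x - f x) m S
      (fun u hu => hsup n u hu)
    have hshiftpos : ∀ i, 0 < l (i + m) := fun i => hpos _
    have htri : lamVar (fun i => l (i+m)) (fun x => bern n f x - f x)
        ≤ lamVar (fun i => l (i+m)) (bern n f) + lamVar (fun i => l (i+m)) f :=
      lamVar_le_add _ hshiftpos _ (bern n f) f (fun u _ v _ => by
        have h1 : (bern n f u - f u) - (bern n f v - f v)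
            = (bern n f u - bern n f v) - (f u - f v) := by ring
        rw [h1]
        exact abs_sub _ _)
    have hbb : lamVar (fun i => l (i+m)) (bern n f) ≤ lamVar (fun i => l (i+m)) f :=
      lamVar_bern_le _ hshiftpos f n
    have hm2 : lamVar (fun i => l (i+m)) f ≤ δ/2 := hm.le
    have hofle : ENNReal.ofReal ((m:ℝ) * (2*S) / l 0) ≤ δ := by
      have hle : (m:ℝ) * (2*S) / l 0 ≤ δ.toReal := by
        rw [div_le_iff₀ (hpos 0)]
        have h2 : (0:ℝ) < (m:ℝ) + 1 := by positivity
        have h3 : 2 * ((m:ℝ)+1) * S ≤ 2*((m:ℝ)+1)*ρ := by nlinarith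
        have h4 : 2 * ((m:ℝ)+1) * ρ = δ.toReal * l 0 := by
          rw [hρdef]
          field_simp
        nlinarith [hpos 0, Nat.cast_nonneg (α := ℝ) m]
      calc ENNReal.ofReal ((m:ℝ) * (2*S)/l 0) ≤ ENNReal.ofReal δ.toReal :=
            ENNReal.ofReal_le_ofReal hle
        _ = δ := ENNReal.ofReal_toReal hδtop
    calc lamVar l (fun x => bern n f x - f x)
        ≤ ENNReal.ofReal ((m:ℝ) * (2*S)/l 0)
          + lamVar (fun i => l (i+m)) (fun x => bern n f x - f x) := hsplit
      _ ≤ δ + (lamVar (fun i => l (i+m)) (bern n f) + lamVar (fun i => l (i+m)) f) :=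
          add_le_add hofle htri
      _ ≤ δ + (δ/2 + δ/2) := add_le_add le_rfl (add_le_add (le_trans hbb hm2) hm2)
      _ = δ + δ := by rw [ENNReal.add_halves]
      _ = ε' := by rw [hδdef, ENNReal.add_halves]
      _ ≤ ε := min_le_left _ _
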